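/- Let r ≥ 1 be an integer. Then the set {d ∈ ℕ : d ∣ r and (2 ∣ r → 2 ∣ d)} is equal to the set {Nat.gcd ((x − y : ZMod r).val) r : x, y units of ZMod r}. Consequently, this set has exactly τ(r) elements when r is odd and exactly τ(r/2) elements when r is even, where τ(n) denotes the number of positive divisors of n. -/

import Mathlib

private lemma int_gcd_add_mul (a n k : ℤ) : Int.gcd (a + n * k) n = Int.gcd a n := by
  apply Nat.dvd_antisymm
  · rw [← Int.natCast_dvd_natCast]
    have h1 : (↑((a + n * k).gcd n) : ℤ) ∣ (a + n * k) - n * k :=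
      dvd_sub (Int.gcd_dvd_left _ _) ((Int.gcd_dvd_right _ _).mul_right k)
    exact Int.dvd_coe_gcd (by simpa using h1) (Int.gcd_dvd_right _ _)
  · rw [← Int.natCast_dvd_natCast]
    exact Int.dvd_coe_gcd
      (dvd_add (Int.gcd_dvd_left _ _) ((Int.gcd_dvd_right _ _).mul_right k))
      (Int.gcd_dvd_right _ _)

private lemma int_gcd_natCast (a : ℤ) (n : ℕ) : Int.gcd a (n : ℤ) = Nat.gcd a.natAbs n := by
  simp [Int.gcd]

private lemma int_gcd_coprime_mul {m n : ℕ} (h : Nat.Coprime m n) (a : ℤ) :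
    Int.gcd a ((m * n : ℕ) : ℤ) = Int.gcd a (m : ℤ) * Int.gcd a (n : ℤ) := by
  rw [int_gcd_natCast, int_gcd_natCast, int_gcd_natCast]
  exact Nat.Coprime.gcd_mul _ h

private lemma key_lemma (r : ℕ) : 0 < r → ∀ d : ℕ, d ∣ r → (2 ∣ r → 2 ∣ d) →
    ∃ a : ℤ, IsCoprime a (r : ℤ) ∧ Int.gcd (a - 1) (r : ℤ) = d := by
  induction r using Nat.recOnPosPrimePosCoprime with
  | prime_pow p n hp hn =>
    intro _ d hd h2
    obtain ⟨j, hj, rfl⟩ := (Nat.dvd_prime_pow hp).mp hd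
    rcases Nat.eq_zero_or_pos j with hj0 | hj1
    · subst hj0
      -- d = 1; p must be odd
      have hpodd : p ≠ 2 := by
        rintro rfl
        have : 2 ∣ 2 ^ n := dvd_pow_self 2 hn.ne'
        simpa using h2 this
    -- a = 2
      refine ⟨2, ?_, by norm_num⟩
      have hc : Nat.Coprime 2 (p ^ n) :=
        Nat.Coprime.pow_right n ((Nat.coprime_primes Nat.prime_two hp).mpr
          (fun h => hpodd h.symm))
      have := hc.isCoprime
      push_cast at this ⊢
      exact this
    · -- a = 1 + p ^ j
      refine ⟨1 + (p : ℤ) ^ j, ?_, ?_⟩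
      · have hnd : ¬ p ∣ (1 + p ^ j) := by
          intro hdvd
          have hp2 : p ∣ p ^ j := dvd_pow_self p hj1.ne'
          have h1 : p ∣ 1 := by simpa using Nat.dvd_sub hdvd hp2
          rw [Nat.dvd_one] at h1
          exact hp.one_lt.ne' h1
        have hcop : Nat.Coprime (1 + p ^ j) (p ^ n) :=
          Nat.Coprime.pow_right n
            (Nat.coprime_comm.mp ((Nat.Prime.coprime_iff_not_dvd hp).mpr hnd))
        have := hcop.isCoprime
        push_cast at this ⊢
        exact this
      · have : (1 : ℤ) + (p : ℤ) ^ j - 1 = ((p ^ j : ℕ) : ℤ) := by push_cast; ring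
        rw [this, Int.gcd_natCast_natCast]
        exact Nat.gcd_eq_left (pow_dvd_pow p hj)
  | zero => intro h; omega
  | one =>
    intro _ d hd _
    rw [Nat.dvd_one] at hd
    subst hd
    exact ⟨1, isCoprime_one_left, by simp⟩
  | coprime a b ha hb hab iha ihb =>
    intro _ d hd h2
    have hd1 : Nat.gcd d a ∣ a := Nat.gcd_dvd_right d a
    have hd2 : Nat.gcd d b ∣ b := Nat.gcd_dvd_right d b
    have hdsplit : d = Nat.gcd d a * Nat.gcd d b := by
      rw [← Nat.Coprime.gcd_mul d hab]
      exact (Nat.gcd_eq_left hd).symm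
    obtain ⟨x, hx, hgx⟩ := iha (by omega) (Nat.gcd d a) hd1
      (fun h2a => Nat.dvd_gcd (h2 (h2a.mul_right b)) h2a)
    obtain ⟨y, hy, hgy⟩ := ihb (by omega) (Nat.gcd d b) hd2
      (fun h2b => Nat.dvd_gcd (h2 (h2b.mul_left a)) h2b)
    obtain ⟨u, v, huv⟩ := hab.isCoprime
    -- z ≡ x mod a, z ≡ y mod b
    set z : ℤ := x + (a : ℤ) * ((y - x) * u) with hz
    have hzb : z = y + (b : ℤ) * ((x - y) * v) := by
      rw [hz]
      linear_combination (y - x) * huv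
    have hza : IsCoprime z (a : ℤ) := hz ▸ hx.add_mul_left_left _
    have hzbcop : IsCoprime z (b : ℤ) := hzb ▸ hy.add_mul_left_left _
    refine ⟨z, ?_, ?_⟩
    · push_cast
      exact IsCoprime.mul_right hza hzbcop
    · rw [int_gcd_coprime_mul hab]
      have e1 : Int.gcd (z - 1) (a : ℤ) = Nat.gcd d a := by
        have : z - 1 = ((x : ℤ) - 1) + (a : ℤ) * ((y - x) * u) := by rw [hz]; ring
        rw [this, int_gcd_add_mul, hgx]
      have e2 : Int.gcd (z - 1) (b : ℤ) = Nat.gcd d b := by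
        have : z - 1 = ((y : ℤ) - 1) + (b : ℤ) * ((x - y) * v) := by rw [hzb]; ring
        rw [this, int_gcd_add_mul, hgy]
      rw [e1, e2, ← hdsplit]

theorem stmt_0 (r : ℕ) (hr : 1 ≤ r) :
    ({d : ℕ | d ∣ r ∧ (2 ∣ r → 2 ∣ d)} =
      {g : ℕ | ∃ x y : (ZMod r)ˣ, g = Nat.gcd (((x : ZMod r) - (y : ZMod r)).val) r}) ∧
    (Odd r → {d : ℕ | d ∣ r ∧ (2 ∣ r → 2 ∣ d)}.ncard = r.divisors.card) ∧
    (Even r → {d : ℕ | d ∣ r ∧ (2 ∣ r → 2 ∣ d)}.ncard = (r / 2).divisors.card) := by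
  haveI : NeZero r := ⟨by omega⟩
  refine ⟨?_, ?_, ?_⟩
  · ext d
    simp only [Set.mem_setOf_eq]
    constructor
    · rintro ⟨hd, h2⟩
      obtain ⟨a, hcop, hgcd⟩ := key_lemma r (by omega) d hd h2
      obtain ⟨u, v, huv⟩ := hcop
      have hunit : IsUnit ((a : ℤ) : ZMod r) := by
        apply IsUnit.of_mul_eq_one ((u : ℤ) : ZMod r)
        have h1 : ((u * a + v * r : ℤ) : ZMod r) = ((1 : ℤ) : ZMod r) := by rw [huv]
        push_cast at h1
        rw [ZMod.natCast_self, mul_zero, add_zero] at h1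
        rw [mul_comm]
        exact h1
      refine ⟨hunit.unit, 1, ?_⟩
      rw [IsUnit.unit_spec, Units.val_one]
      have hc : ((a : ℤ) : ZMod r) - 1 = ((a - 1 : ℤ) : ZMod r) := by push_cast; ring
      rw [hc]
      have hv : ((((a - 1 : ℤ) : ZMod r).val : ℕ) : ℤ) = (a - 1) % r := ZMod.val_intCast _
      have : Nat.gcd (((a - 1 : ℤ) : ZMod r).val) r
          = Int.gcd (((((a - 1 : ℤ) : ZMod r).val : ℕ) : ℤ)) ((r : ℕ) : ℤ) := by
        rw [Int.gcd_natCast_natCast]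
      rw [this, hv]
      have hmod : (a - 1) % (r : ℤ) = (a - 1) + (r : ℤ) * (-((a - 1) / r)) := by
        rw [Int.emod_def]; ring
      rw [hmod, int_gcd_add_mul, hgcd]
    · rintro ⟨x, y, rfl⟩
      refine ⟨Nat.gcd_dvd_right _ _, fun h2r => ?_⟩
      apply Nat.dvd_gcd _ h2r
      rw [← ZMod.natCast_eq_zero_iff]
      have hcast : ((((x : ZMod r) - y).val : ℕ) : ZMod 2)
          = ZMod.castHom h2r (ZMod 2) ((x : ZMod r) - y) := by
        rw [ZMod.natCast_val, ZMod.castHom_apply]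
      rw [hcast, map_sub]
      have hone : ∀ w : ZMod 2, IsUnit w → w = 1 := by decide
      rw [hone _ (x.isUnit.map _), hone _ (y.isUnit.map _), sub_self]
  · intro hodd
    have h2 : ¬ (2 ∣ r) := by rw [Nat.odd_iff] at hodd; omega
    have hset : {d : ℕ | d ∣ r ∧ (2 ∣ r → 2 ∣ d)} = ↑r.divisors := by
      ext d
      simp only [Set.mem_setOf_eq, Finset.coe_sort_coe, Finset.mem_coe, Nat.mem_divisors]
      constructor
      · rintro ⟨hd, _⟩; exact ⟨hd, by omega⟩
      · rintro ⟨hd, _⟩; exact ⟨hd, fun h => absurd h h2⟩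
    rw [hset, Set.ncard_coe_finset]
  · intro heven
    have h2 : 2 ∣ r := heven.two_dvd
    have hset : {d : ℕ | d ∣ r ∧ (2 ∣ r → 2 ∣ d)}
        = (fun e => 2 * e) '' ↑((r / 2).divisors) := by
      ext d
      simp only [Set.mem_setOf_eq, Set.mem_image, Finset.mem_coe, Nat.mem_divisors]
      constructor
      · rintro ⟨hdr, hd2⟩
        obtain ⟨m, rfl⟩ := hd2 h2
        obtain ⟨k, hk⟩ := hdr
        have h' : r = 2 * (m * k) := by rw [hk, mul_assoc]
        exact ⟨m, ⟨⟨k, by omega⟩, by omega⟩, by omega⟩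
      · rintro ⟨e, ⟨⟨k, hk⟩, hr2⟩, rfl⟩
        refine ⟨⟨k, ?_⟩, fun _ => ⟨e, rfl⟩⟩
        rw [mul_assoc]
        omega
    rw [hset, Set.ncard_image_of_injective _ (mul_right_injective₀ two_ne_zero),
      Set.ncard_coe_finset]
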